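/- Let ψ ∈ ℂ^{2^n} ⊗ ℂ^{2^m} be a normalized state on n + m qubits with ρ = |ψ⟩⟨ψ|, and let P be a Pauli string on the first n qubits. Define the marginal probability π(P) = Σ_{Q ∈ 𝒫_m} (1/2^{n+m}) Tr[ρ (P ⊗ Q)]², where the sum runs over all Pauli strings Q on the last m qubits. Then π(P) = (1/2^n) Tr[X²], where X = Tr_A[ρ (P ⊗ I_{2^m})] is the partial trace over the first factor ℂ^{2^n} of ρ (P ⊗ I), a Hermitian 2^m × 2^m matrix. Equivalently, π(P) equals (1/2^n) times the squared Frobenius norm of X. -/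
import Mathlib


open Matrix
open scoped ComplexOrder

/-- The four Pauli matrices. -/
noncomputable def pauli : Fin 4 → Matrix (Fin 2) (Fin 2) ℂ
  | 0 => 1
  | 1 => !![0, 1; 1, 0]
  | 2 => !![0, -Complex.I; Complex.I, 0]
  | 3 => !![1, 0; 0, -1]

/-- The Pauli string `σ^{α 0} ⊗ ⋯ ⊗ σ^{α (N-1)}` as a `2^N × 2^N` matrix,
indexed by computational-basis labels `Fin N → Fin 2`. -/
noncomputable def pauliString {N : ℕ} (α : Fin N → Fin 4) :
    Matrix (Fin N → Fin 2) (Fin N → Fin 2) ℂ :=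
  fun s s' => ∏ j, pauli (α j) (s j) (s' j)

/-- The stabilizer group of `ψ`: the Pauli strings of which `ψ` is a `±1` eigenvector. -/
def stabGroup {N : ℕ} (ψ : (Fin N → Fin 2) → ℂ) :
    Set (Matrix (Fin N → Fin 2) (Fin N → Fin 2) ℂ) :=
  {σ | (∃ α : Fin N → Fin 4, σ = pauliString α) ∧ (σ *ᵥ ψ = ψ ∨ σ *ᵥ ψ = -ψ)}

/-- A unitary `U` is Clifford if it maps every Pauli string to a Pauli string up to a
phase `c ∈ {1, -1, i, -i}` under conjugation. -/
def IsClifford {N : ℕ} (U : Matrix (Fin N → Fin 2) (Fin N → Fin 2) ℂ) : Prop :=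
  U ∈ Matrix.unitaryGroup (Fin N → Fin 2) ℂ ∧
  ∀ α : Fin N → Fin 4, ∃ (β : Fin N → Fin 4) (c : ℂ),
    (c = 1 ∨ c = -1 ∨ c = Complex.I ∨ c = -Complex.I) ∧
    U * pauliString α * Uᴴ = c • pauliString β

/-- The T gate acting on qubit `i`: `I^{⊗(i-1)} ⊗ diag(1, e^{iπ/4}) ⊗ I^{⊗(N-i)}`. -/
noncomputable def Tgate {N : ℕ} (i : Fin N) :
    Matrix (Fin N → Fin 2) (Fin N → Fin 2) ℂ :=
  Matrix.diagonal fun s => if s i = 1 then Complex.exp (Complex.I * Real.pi / 4) else 1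

/-- The state `|0⟩^{⊗N}`. -/
def zeroState (N : ℕ) : (Fin N → Fin 2) → ℂ :=
  fun s => if s = fun _ => 0 then 1 else 0

open Kronecker

lemma pauli_conj (k : Fin 4) (a b : Fin 2) :
    (starRingEnd ℂ) (pauli k a b) = pauli k b a := by
  fin_cases k <;> fin_cases a <;> fin_cases b <;>
    simp [pauli, Matrix.one_apply]

lemma pauli_sum (a b c d : Fin 2) :
    ∑ k : Fin 4, pauli k a b * pauli k c d =
      (if a = d then 1 else 0) * (if b = c then 1 else 0) * 2 := by
  fin_cases a <;> fin_cases b <;> fin_cases c <;> fin_cases d <;>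
    simp [pauli, Fin.sum_univ_four, Matrix.one_apply, Complex.I_mul_I] <;> ring_nf

lemma pauliString_conj {N : ℕ} (α : Fin N → Fin 4) (s s' : Fin N → Fin 2) :
    (starRingEnd ℂ) (pauliString α s s') = pauliString α s' s := by
  simp [pauliString, map_prod, pauli_conj]

lemma pauliString_sum {N : ℕ} (b b' c c' : Fin N → Fin 2) :
    ∑ β : Fin N → Fin 4, pauliString β b b' * pauliString β c c' =
      (if b = c' then 1 else 0) * (if b' = c then 1 else 0) * 2 ^ N := by
  have h : ∀ β : Fin N → Fin 4, pauliString β b b' * pauliString β c c' =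
      ∏ j, (pauli (β j) (b j) (b' j) * pauli (β j) (c j) (c' j)) := by
    intro β; simp [pauliString, Finset.prod_mul_distrib]
  simp_rw [h]
  rw [← Fintype.piFinset_univ,
    ← Finset.prod_univ_sum (t := fun _ => Finset.univ)
      (f := fun j k => pauli k (b j) (b' j) * pauli k (c j) (c' j))]
  simp_rw [pauli_sum]
  rw [Finset.prod_mul_distrib, Finset.prod_mul_distrib, Finset.prod_boole, Finset.prod_boole]
  simp [funext_iff]


/-- For a normalized state `ψ` on `n + m` qubits with `ρ = |ψ⟩⟨ψ|` and a
Pauli string `P` on the first `n` qubits, the marginal probability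
`π(P) = ∑_{Q ∈ 𝒫_m} Tr[ρ (P ⊗ Q)]² / 2^{n+m}` equals `Tr[X²] / 2^n`, where
`X = Tr_A[ρ (P ⊗ I)]` is the partial trace over the first factor, a Hermitian matrix. -/
theorem marginal_prob_eq_partialTrace {n m : ℕ}
    (ψ : ((Fin n → Fin 2) × (Fin m → Fin 2)) → ℂ)
    (hψ : ∑ s, ‖ψ s‖ ^ 2 = 1)
    (α : Fin n → Fin 4)
    (X : Matrix (Fin m → Fin 2) (Fin m → Fin 2) ℂ)
    (hX : X = fun b b' => ∑ a,
      (Matrix.vecMulVec ψ (star ψ) * (pauliString α ⊗ₖ (1 : Matrix (Fin m → Fin 2) (Fin m → Fin 2) ℂ))) (a, b) (a, b')) :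
    X.IsHermitian ∧
    ∑ β : Fin m → Fin 4,
        Matrix.trace (Matrix.vecMulVec ψ (star ψ) * (pauliString α ⊗ₖ pauliString β)) ^ 2
          / 2 ^ (n + m)
      = Matrix.trace (X * X) / 2 ^ n := by
  have hXe : ∀ b b', X b b' = ∑ a, ∑ a',
      ψ (a, b) * (starRingEnd ℂ) (ψ (a', b')) * pauliString α a' a := by
    intro b b'
    rw [hX]
    refine Finset.sum_congr rfl fun a _ => ?_
    simp only [Matrix.mul_apply, Matrix.vecMulVec_apply, Matrix.kroneckerMap_apply,
      Pi.star_apply, RCLike.star_def, Matrix.one_apply]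
    rw [Fintype.sum_prod_type]
    refine Finset.sum_congr rfl fun a' _ => ?_
    simp [mul_ite, Finset.sum_ite_eq', mul_comm]
  constructor
  · rw [Matrix.IsHermitian]
    ext b b'
    rw [Matrix.conjTranspose_apply, hXe, hXe]
    simp only [RCLike.star_def, map_sum]
    rw [Finset.sum_comm]
    refine Finset.sum_congr rfl fun a _ => Finset.sum_congr rfl fun a' _ => ?_
    simp only [_root_.map_mul, Complex.conj_conj, pauliString_conj]
    ring
  · have key : ∀ β : Fin m → Fin 4,
        Matrix.trace (Matrix.vecMulVec ψ (star ψ) * (pauliString α ⊗ₖ pauliString β))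
          = ∑ b, ∑ b', X b b' * pauliString β b' b := by
      intro β
      simp_rw [hXe, Finset.sum_mul]
      simp only [Matrix.trace, Matrix.diag, Matrix.mul_apply, Matrix.vecMulVec_apply,
        Matrix.kroneckerMap_apply, Pi.star_apply, RCLike.star_def]
      rw [Fintype.sum_prod_type]
      rw [Finset.sum_comm]
      refine Finset.sum_congr rfl fun b _ => ?_
      simp_rw [Fintype.sum_prod_type]
      rw [show (∑ a : Fin n → Fin 2, ∑ a' : Fin n → Fin 2, ∑ b' : Fin m → Fin 2,
            ψ (a, b) * (starRingEnd ℂ) (ψ (a', b')) *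
              (pauliString α a' a * pauliString β b' b))
          = ∑ a : Fin n → Fin 2, ∑ b' : Fin m → Fin 2, ∑ a' : Fin n → Fin 2,
            ψ (a, b) * (starRingEnd ℂ) (ψ (a', b')) *
              (pauliString α a' a * pauliString β b' b)
        from Finset.sum_congr rfl fun a _ => Finset.sum_comm]
      rw [Finset.sum_comm]
      refine Finset.sum_congr rfl fun b' _ => Finset.sum_congr rfl fun a _ =>
        Finset.sum_congr rfl fun a' _ => by ring
    simp_rw [key]
    rw [← Finset.sum_div]
    have main : (∑ β : Fin m → Fin 4, (∑ b, ∑ b', X b b' * pauliString β b' b) ^ 2)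
        = 2 ^ m * Matrix.trace (X * X) := by
      simp_rw [sq, Finset.sum_mul, Finset.mul_sum]
      rw [Finset.sum_comm]
      trans ∑ b : Fin m → Fin 2, ∑ b' : Fin m → Fin 2, ∑ c : Fin m → Fin 2,
          ∑ c' : Fin m → Fin 2, X b b' * X c c' *
            ((if b' = c then 1 else 0) * (if b = c' then 1 else 0) * 2 ^ m)
      · refine Finset.sum_congr rfl fun b _ => ?_
        rw [Finset.sum_comm]
        refine Finset.sum_congr rfl fun b' _ => ?_
        rw [Finset.sum_comm]
        refine Finset.sum_congr rfl fun c _ => ?_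
        rw [Finset.sum_comm]
        refine Finset.sum_congr rfl fun c' _ => ?_
        rw [← pauliString_sum b' b c' c, Finset.mul_sum]
        refine Finset.sum_congr rfl fun β _ => by ring
      · simp only [mul_ite, mul_one, mul_zero, ite_mul, zero_mul, Finset.sum_ite_eq,
          Finset.sum_ite_eq', Finset.mem_univ, if_true]
        rw [Matrix.trace, Finset.mul_sum]
        refine Finset.sum_congr rfl fun b _ => ?_
        rw [Matrix.diag, Matrix.mul_apply, Finset.mul_sum]
        refine Finset.sum_congr rfl fun b' _ => by ring
    rw [main, pow_add, mul_comm ((2:ℂ)^n) _, mul_div_mul_left _ _ (by positivity)]
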